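/- Let E : [t₁, T) → ℝ be a positive differentiable function with E(t) ≥ E(t₁) > 0 for all t, satisfying E'(t) ≤ A·E(t)^(3/2) + B·E(t)² on (t₁, T) with A, B > 0. If limsup_{t→T} E(t) = ∞, then T − t₁ ≥ (2/A)·(1/√E(t₁)) + (B/A²)·lim_{t→T} log( E(t₁)(A + B√E(t))² / ( E(t)(A + B√E(t₁))² ) ), and in particular T − t₁ ≥ (2/A)·E(t₁)^(−1/2) + (B/A²)·log( E(t₁)B² / (A + B√E(t₁))² ). -/

import Mathlib

open Filter Real

noncomputable def Faux (A B : ℝ) (E : ℝ → ℝ) (t : ℝ) : ℝ :=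
  -2/(A * Real.sqrt (E t)) + (2*B/A^2) *
    (Real.log (A + B * Real.sqrt (E t)) - Real.log (Real.sqrt (E t)))

lemma Faux_hasDerivAt (A B : ℝ) (hA : 0 < A) (hB : 0 < B) (E E' : ℝ → ℝ) (t : ℝ)
    (hd : HasDerivAt E (E' t) t) (hpos : 0 < E t) :
    HasDerivAt (Faux A B E)
      (E' t / (Real.sqrt (E t)^3 * (A + B * Real.sqrt (E t)))) t := by
  have hu : 0 < Real.sqrt (E t) := Real.sqrt_pos.2 hpos
  have hus : HasDerivAt (fun t => Real.sqrt (E t)) (E' t / (2 * Real.sqrt (E t))) t := by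
    have := (Real.hasDerivAt_sqrt (ne_of_gt hpos)).comp t hd
    exact this.congr_deriv (by ring)
  have hAB : 0 < A + B * Real.sqrt (E t) := by positivity
  have h1 : HasDerivAt (fun t => -2/(A * Real.sqrt (E t)))
      (-2/A * (-(E' t / (2 * Real.sqrt (E t))) / (Real.sqrt (E t))^2)) t := by
    have heq : (fun t => -2/(A * Real.sqrt (E t))) = fun t => -2/A * (Real.sqrt (E t))⁻¹ := by
      funext s; field_simp
    rw [heq]
    exact (hus.inv (ne_of_gt hu)).const_mul _
  have h2 : HasDerivAt (fun t => Real.log (A + B * Real.sqrt (E t)))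
      ((B * (E' t / (2 * Real.sqrt (E t)))) / (A + B * Real.sqrt (E t))) t :=
    (((hus.const_mul B).const_add A)).log (ne_of_gt hAB)
  have h3 : HasDerivAt (fun t => Real.log (Real.sqrt (E t)))
      ((E' t / (2 * Real.sqrt (E t))) / Real.sqrt (E t)) t :=
    hus.log (ne_of_gt hu)
  have := h1.add (((h2.sub h3)).const_mul (2*B/A^2))
  refine this.congr_deriv ?_
  have hA' := hA.ne'
  have hu' := hu.ne'
  have hAB' := hAB.ne'
  field_simp
  set s := Real.sqrt (E t) with hs
  ring

theorem blowup_time_lower_bound (t₁ T A B : ℝ) (ht : t₁ < T) (hA : 0 < A) (hB : 0 < B)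
    (E E' : ℝ → ℝ)
    (hderiv : ∀ t ∈ Set.Ico t₁ T, HasDerivAt E (E' t) t)
    (hE0 : 0 < E t₁)
    (hmono : ∀ t ∈ Set.Ico t₁ T, E t₁ ≤ E t)
    (hODI : ∀ t ∈ Set.Ioo t₁ T, E' t ≤ A * E t ^ ((3 : ℝ) / 2) + B * E t ^ 2)
    (hblow : ∀ M : ℝ, ∃ᶠ t in nhdsWithin T (Set.Iio T), M ≤ E t) :
    (∀ L : ℝ,
      Tendsto (fun t => Real.log (E t₁ * (A + B * Real.sqrt (E t)) ^ 2 /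
          (E t * (A + B * Real.sqrt (E t₁)) ^ 2))) (nhdsWithin T (Set.Iio T)) (nhds L) →
      (2 / A) * (1 / Real.sqrt (E t₁)) + (B / A ^ 2) * L ≤ T - t₁) ∧
    (2 / A) * (E t₁) ^ (-(1 : ℝ) / 2) +
      (B / A ^ 2) * Real.log (E t₁ * B ^ 2 / (A + B * Real.sqrt (E t₁)) ^ 2) ≤ T - t₁ := by
  have hEpos : ∀ t ∈ Set.Ico t₁ T, 0 < E t := fun t htm => lt_of_lt_of_le hE0 (hmono t htm)
  have hupos : ∀ t ∈ Set.Ico t₁ T, 0 < Real.sqrt (E t) :=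
    fun t htm => Real.sqrt_pos.2 (hEpos t htm)
  have hu₁ : 0 < Real.sqrt (E t₁) := Real.sqrt_pos.2 hE0
  have hAB₁ : 0 < A + B * Real.sqrt (E t₁) := by positivity
  -- derivative of F
  have hFd : ∀ t ∈ Set.Ico t₁ T, HasDerivAt (Faux A B E)
      (E' t / (Real.sqrt (E t)^3 * (A + B * Real.sqrt (E t)))) t :=
    fun t htm => Faux_hasDerivAt A B hA hB E E' t (hderiv t htm) (hEpos t htm)
  have hHd : ∀ t ∈ Set.Ico t₁ T, HasDerivAt (fun t => t - Faux A B E t)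
      (1 - E' t / (Real.sqrt (E t)^3 * (A + B * Real.sqrt (E t)))) t :=
    fun t htm => (hasDerivAt_id t).sub (hFd t htm)
  -- monotonicity of t - F t
  have hmonoH : MonotoneOn (fun t => t - Faux A B E t) (Set.Ico t₁ T) := by
    apply monotoneOn_of_deriv_nonneg (convex_Ico _ _)
    · exact fun t htm => (hHd t htm).continuousAt.continuousWithinAt
    · rw [interior_Ico]
      exact fun t htm =>
        (hHd t (Set.Ioo_subset_Ico_self htm)).differentiableAt.differentiableWithinAt
    · rw [interior_Ico]
      intro t htm
      rw [(hHd t (Set.Ioo_subset_Ico_self htm)).deriv]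
      have hE := hEpos t (Set.Ioo_subset_Ico_self htm)
      have hu := hupos t (Set.Ioo_subset_Ico_self htm)
      have hden : 0 < Real.sqrt (E t)^3 * (A + B * Real.sqrt (E t)) := by positivity
      have hnum : E' t ≤ Real.sqrt (E t)^3 * (A + B * Real.sqrt (E t)) := by
        have hO := hODI t htm
        have husq : Real.sqrt (E t)^2 = E t := Real.sq_sqrt hE.le
        have h32 : E t ^ ((3:ℝ)/2) = Real.sqrt (E t)^3 := by
          rw [show E t ^ ((3:ℝ)/2) = (E t ^ ((1:ℝ)/2))^(3:ℕ) by
            rw [← Real.rpow_natCast (E t ^ ((1:ℝ)/2)) 3, ← Real.rpow_mul hE.le]; norm_num]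
          rw [← Real.sqrt_eq_rpow]
        have h2 : E t ^ 2 = (Real.sqrt (E t)^2)^2 := by rw [husq]
        calc E' t ≤ A * E t ^ ((3:ℝ)/2) + B * E t ^ 2 := hO
          _ = Real.sqrt (E t)^3 * (A + B * Real.sqrt (E t)) := by
            rw [h32, h2]; ring
      have : E' t / (Real.sqrt (E t)^3 * (A + B * Real.sqrt (E t))) ≤ 1 :=
        (div_le_one hden).2 hnum
      linarith
  have hkey : ∀ t ∈ Set.Ico t₁ T, Faux A B E t - Faux A B E t₁ ≤ t - t₁ := by
    intro t htm
    have := hmonoH ⟨le_refl t₁, ht⟩ htm htm.1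
    simp only at this
    linarith
  -- lower bound on F t for large E t
  have hFlb : ∀ t ∈ Set.Ico t₁ T,
      (2*B/A^2) * Real.log B - 2/(A * Real.sqrt (E t)) ≤ Faux A B E t := by
    intro t htm
    have hu := hupos t htm
    have hlog : Real.log B + Real.log (Real.sqrt (E t)) ≤
        Real.log (A + B * Real.sqrt (E t)) := by
      rw [← Real.log_mul hB.ne' hu.ne']
      apply Real.log_le_log (by positivity)
      nlinarith
    have hBA : 0 ≤ 2*B/A^2 := by positivity
    have hint : (2*B/A^2) * Real.log B ≤
        (2*B/A^2) * (Real.log (A + B * Real.sqrt (E t)) - Real.log (Real.sqrt (E t))) :=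
      mul_le_mul_of_nonneg_left (by linarith) hBA
    have hneg : -2/(A * Real.sqrt (E t)) = -(2/(A * Real.sqrt (E t))) := by ring
    unfold Faux
    linarith
  constructor
  · -- part 1
    intro L hL
    -- identity relating F and the log expression
    have hg : ∀ t ∈ Set.Ico t₁ T, Faux A B E t - Faux A B E t₁ =
        -2/(A * Real.sqrt (E t)) + 2/(A * Real.sqrt (E t₁)) +
        (B/A^2) * Real.log (E t₁ * (A + B * Real.sqrt (E t)) ^ 2 /
          (E t * (A + B * Real.sqrt (E t₁)) ^ 2)) := by
      intro t htm
      have hE := hEpos t htm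
      have hu := hupos t htm
      have hAB : 0 < A + B * Real.sqrt (E t) := by positivity
      rw [Real.log_div (by positivity) (by positivity),
          Real.log_mul hE0.ne' (by positivity),
          Real.log_mul hE.ne' (by positivity),
          Real.log_pow, Real.log_pow,
          show Real.log (E t₁) = 2 * Real.log (Real.sqrt (E t₁)) by
            rw [Real.log_sqrt hE0.le]; ring,
          show Real.log (E t) = 2 * Real.log (Real.sqrt (E t)) by
            rw [Real.log_sqrt hE.le]; ring]
      unfold Faux
      push_cast
      ring
    apply le_of_forall_pos_le_add
    intro ε hε
    have hδ : 0 < ε * A^2 / (2*B) := by positivity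
    have hev1 : ∀ᶠ t in nhdsWithin T (Set.Iio T),
        |Real.log (E t₁ * (A + B * Real.sqrt (E t)) ^ 2 /
          (E t * (A + B * Real.sqrt (E t₁)) ^ 2)) - L| < ε * A^2 / (2*B) := by
      have := Metric.tendsto_nhds.mp hL _ hδ
      filter_upwards [this] with t h
      rwa [Real.dist_eq] at h
    have hev2 : ∀ᶠ t in nhdsWithin T (Set.Iio T), t₁ < t :=
      (eventually_gt_nhds ht).filter_mono nhdsWithin_le_nhds
    have hev3 : ∀ᶠ t in nhdsWithin T (Set.Iio T), t ∈ Set.Iio T :=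
      eventually_mem_nhdsWithin
    set M : ℝ := (max 1 (4/(A*ε)))^2 with hM
    obtain ⟨t, htM, hdist, ht1, htT⟩ :=
      ((hblow M).and_eventually (hev1.and (hev2.and hev3))).exists
    have htIco : t ∈ Set.Ico t₁ T := ⟨ht1.le, htT⟩
    have hu := hupos t htIco
    have hsM : max 1 (4/(A*ε)) ≤ Real.sqrt (E t) := by
      calc max 1 (4/(A*ε)) = Real.sqrt M := by
            rw [hM, Real.sqrt_sq (le_trans zero_le_one (le_max_left _ _))]
        _ ≤ Real.sqrt (E t) := Real.sqrt_le_sqrt htM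
    have hsmall : 2/(A * Real.sqrt (E t)) ≤ ε/2 := by
      have h4 : 4/(A*ε) ≤ Real.sqrt (E t) := le_trans (le_max_right _ _) hsM
      rw [div_le_iff₀ (by positivity)]
      rw [div_le_iff₀ (by positivity)] at h4
      nlinarith
    have hgL : L - ε * A^2 / (2*B) ≤
        Real.log (E t₁ * (A + B * Real.sqrt (E t)) ^ 2 /
          (E t * (A + B * Real.sqrt (E t₁)) ^ 2)) := by
      have := abs_sub_lt_iff.mp hdist
      linarith [this.2]
    have hkeyt := hkey t htIco
    have hgt := hg t htIco
    have hBA2 : 0 ≤ B/A^2 := by positivity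
    have hmul := mul_le_mul_of_nonneg_left hgL hBA2
    have hδeq : (B/A^2) * (ε * A^2 / (2*B)) = ε/2 := by
      field_simp
    have h1u : (2/A) * (1/Real.sqrt (E t₁)) = 2/(A * Real.sqrt (E t₁)) := by
      field_simp
    rw [h1u]
    have hmulL : (B/A^2) * (L - ε * A^2 / (2*B)) = (B/A^2) * L - ε/2 := by
      rw [mul_sub, hδeq]
    rw [hmulL] at hmul
    have hneg : -2/(A * Real.sqrt (E t)) = -(2/(A * Real.sqrt (E t))) := by ring
    linarith [Set.mem_Iio.mp htT]
  · -- part 2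
    apply le_of_forall_pos_le_add
    intro ε hε
    set M : ℝ := (max 1 (2/(A*ε)))^2 with hM
    have hev2 : ∀ᶠ t in nhdsWithin T (Set.Iio T), t₁ < t :=
      (eventually_gt_nhds ht).filter_mono nhdsWithin_le_nhds
    have hev3 : ∀ᶠ t in nhdsWithin T (Set.Iio T), t ∈ Set.Iio T :=
      eventually_mem_nhdsWithin
    obtain ⟨t, htM, ht1, htT⟩ := ((hblow M).and_eventually (hev2.and hev3)).exists
    have htIco : t ∈ Set.Ico t₁ T := ⟨ht1.le, htT⟩
    have hu := hupos t htIco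
    have hsM : max 1 (2/(A*ε)) ≤ Real.sqrt (E t) := by
      calc max 1 (2/(A*ε)) = Real.sqrt M := by
            rw [hM, Real.sqrt_sq (le_trans zero_le_one (le_max_left _ _))]
        _ ≤ Real.sqrt (E t) := Real.sqrt_le_sqrt htM
    have hsmall : 2/(A * Real.sqrt (E t)) ≤ ε := by
      have h4 : 2/(A*ε) ≤ Real.sqrt (E t) := le_trans (le_max_right _ _) hsM
      rw [div_le_iff₀ (by positivity)]
      rw [div_le_iff₀ (by positivity)] at h4
      nlinarith
    have hkeyt := hkey t htIco
    have hFlbt := hFlb t htIco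
    -- rewrite the target
    have hrpow : (E t₁) ^ (-(1:ℝ)/2) = 1 / Real.sqrt (E t₁) := by
      rw [show (-(1:ℝ)/2) = -(1/2 : ℝ) by norm_num, Real.rpow_neg hE0.le,
        ← Real.sqrt_eq_rpow, one_div]
    have hlogt : Real.log (E t₁ * B ^ 2 / (A + B * Real.sqrt (E t₁)) ^ 2) =
        2 * Real.log (Real.sqrt (E t₁)) + 2 * Real.log B -
          2 * Real.log (A + B * Real.sqrt (E t₁)) := by
      rw [Real.log_div (by positivity) (by positivity),
          Real.log_mul hE0.ne' (by positivity),
          Real.log_pow, Real.log_pow,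
          show Real.log (E t₁) = 2 * Real.log (Real.sqrt (E t₁)) by
            rw [Real.log_sqrt hE0.le]; ring]
      push_cast
      ring
    have htarget : (2 / A) * (E t₁) ^ (-(1:ℝ)/2) +
        (B / A ^ 2) * Real.log (E t₁ * B ^ 2 / (A + B * Real.sqrt (E t₁)) ^ 2) =
        (2*B/A^2) * Real.log B - Faux A B E t₁ := by
      rw [hrpow, hlogt]
      unfold Faux
      field_simp
      ring
    rw [htarget]
    linarith [Set.mem_Iio.mp htT]
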